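/- Let G be a group generated by elements β₁, …, βₙ, let ψ : G → ℤ be a group homomorphism with ψ(βᵢ) = 1 for every i, and set K = ker ψ. Suppose there is a connected simple graph Γ on the vertex set {1,…,n} such that for every edge {i,j} of Γ one has ⁅βᵢ, βⱼ⁆ ∈ ⁅K,K⁆. Then ⁅βᵢ, βⱼ⁆ ∈ ⁅K,K⁆ for all pairs i, j, and consequently the commutator subgroup of G equals ⁅K,K⁆, i.e. ⁅G,G⁆ = ⁅K,K⁆. -/

import Mathlib

open scoped commutatorElement

/-- Let `G` be a group generated by `β 1, …, β n`, `ψ : G → ℤ` a group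
homomorphism (with `ℤ` viewed multiplicatively as `Multiplicative ℤ`) with `ψ (β i) = 1`
for every `i`, and `K = ker ψ`. If there is a connected simple graph `Γ` on `{1, …, n}`
such that `⁅β i, β j⁆ ∈ ⁅K, K⁆` for every edge `{i, j}` of `Γ`, then `⁅β i, β j⁆ ∈ ⁅K, K⁆`
for all pairs `i, j`, and `⁅G, G⁆ = ⁅K, K⁆`. -/
theorem admissible_graph_implies_commutator_eq
    {G : Type*} [Group G] (n : ℕ) (β : Fin n → G)
    (hgen : Subgroup.closure (Set.range β) = ⊤)
    (ψ : G →* Multiplicative ℤ)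
    (hψ : ∀ i : Fin n, ψ (β i) = Multiplicative.ofAdd 1)
    (Γ : SimpleGraph (Fin n)) (hconn : Γ.Connected)
    (hedge : ∀ i j : Fin n, Γ.Adj i j → ⁅β i, β j⁆ ∈ ⁅ψ.ker, ψ.ker⁆) :
    (∀ i j : Fin n, ⁅β i, β j⁆ ∈ ⁅ψ.ker, ψ.ker⁆) ∧
      commutator G = ⁅ψ.ker, ψ.ker⁆ := by
  set N : Subgroup G := ⁅ψ.ker, ψ.ker⁆ with hNdef
  haveI hNnorm : N.Normal := Subgroup.commutator_normal _ _
  let π : G →* G ⧸ N := QuotientGroup.mk' N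
  have hmem : ∀ g h : G, ⁅g, h⁆ ∈ N ↔ Commute (π g) (π h) := by
    intro g h
    rw [← commutatorElement_eq_one_iff_commute, ← map_commutatorElement,
      ← QuotientGroup.eq_one_iff (G := G) (N := N) ⁅g, h⁆]
    rfl
  -- images of kernel elements commute in the quotient
  have hK : ∀ x y : G, x ∈ ψ.ker → y ∈ ψ.ker → Commute (π x) (π y) := by
    intro x y hx hy
    exact (hmem x y).mp (Subgroup.commutator_mem_commutator hx hy)
  -- transitivity step
  have step : ∀ i j k : Fin n, Commute (π (β i)) (π (β j)) →
      Commute (π (β j)) (π (β k)) → Commute (π (β i)) (π (β k)) := by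
    intro i j k hab hbc
    have hx : β i * (β j)⁻¹ ∈ ψ.ker := by
      simp [MonoidHom.mem_ker, hψ]
    have hy : β k * (β j)⁻¹ ∈ ψ.ker := by
      simp [MonoidHom.mem_ker, hψ]
    set a := π (β i)
    set b := π (β j)
    set c := π (β k)
    have hxy : Commute (a * b⁻¹) (c * b⁻¹) := by
      have := hK _ _ hx hy
      simpa [a, b, c] using this
    have hx_b : Commute (a * b⁻¹) b := hab.mul_left (Commute.refl b).inv_left
    have hy_b : Commute (c * b⁻¹) b := hbc.symm.mul_left (Commute.refl b).inv_left
    have h1 : Commute (a * b⁻¹ * b) (c * b⁻¹ * b) :=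
      Commute.mul_left (hxy.mul_right hx_b) (hy_b.symm.mul_right (Commute.refl b))
    simpa using h1
  -- along walks
  have walk : ∀ {i j : Fin n}, Γ.Walk i j → Commute (π (β i)) (π (β j)) := by
    intro i j w
    induction w with
    | nil => exact Commute.refl _
    | @cons u v w h p ih =>
        exact step u v w ((hmem _ _).mp (hedge u v h)) ih
  have allpairs : ∀ i j : Fin n, Commute (π (β i)) (π (β j)) := by
    intro i j
    obtain ⟨w⟩ := hconn.preconnected i j
    exact walk w
  have part1 : ∀ i j : Fin n, ⁅β i, β j⁆ ∈ N := fun i j => (hmem _ _).mpr (allpairs i j)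
  refine ⟨part1, ?_⟩
  apply le_antisymm
  · rw [commutator_def]
    rw [Subgroup.commutator_le]
    intro g _ h _
    rw [hmem]
    have hgen' : Subgroup.closure (π '' Set.range β) = ⊤ := by
      rw [← MonoidHom.map_closure, hgen]
      exact Subgroup.map_top_of_surjective π (QuotientGroup.mk'_surjective N)
    have hg : π g ∈ Subgroup.closure (π '' Set.range β) := by rw [hgen']; trivial
    have hh : π h ∈ Subgroup.closure (π '' Set.range β) := by rw [hgen']; trivial
    refine Subgroup.closure_induction₂ (fun x y hx hy => ?_)
      (fun y _ => Commute.one_left y) (fun x _ => Commute.one_right x)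
      (fun x y z _ _ _ h1 h2 => h1.mul_left h2)
      (fun x y z _ _ _ h1 h2 => h1.mul_right h2)
      (fun x y _ _ h1 => h1.inv_left)
      (fun x y _ _ h1 => h1.inv_right) hg hh
    obtain ⟨x', ⟨i, rfl⟩, rfl⟩ := hx
    obtain ⟨y', ⟨j, rfl⟩, rfl⟩ := hy
    exact allpairs i j
  · exact Subgroup.commutator_mono le_top le_top
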